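/- Let Σ, p be n×n complex matrices with Σ² + p = 0 and p constant symmetric, Σ symmetric. Then for any constant symmetric matrix H₀ with L(u) := exp(uΣ) and H(u) a symmetric-matrix-valued solution of L(u)·H'(u)·L(u)ᵀ = I, the matrix S(u) = Σ + (L(u)H(u)L(u)ᵀ)⁻¹ satisfies the Sachs equation S'(u) + S(u)² + p = 0 on any interval where L(u)H(u)L(u)ᵀ is invertible. -/

import Mathlib

open Matrix

attribute [local instance] Matrix.linftyOpNormedAddCommGroup Matrix.linftyOpNormedRing
  Matrix.linftyOpNormedAlgebra Matrix.linftyOpNormedSpace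

/-- If `Sigma` is a constant symmetric (complex) matrix with `Sigma² + p = 0`, `L u = exp (u Sigma)`,
and `H` is a symmetric-matrix-valued solution of `L u * H' u * (L u)ᵀ = 1`, then
`S u = Sigma + (L u * H u * (L u)ᵀ)⁻¹` satisfies the Sachs equation `S' + S² + p = 0`
on any interval where `L u * H u * (L u)ᵀ` is invertible. -/
theorem stmt3 {n : ℕ} (p Sg : Matrix (Fin n) (Fin n) ℂ)
    (hpsym : pᵀ = p) (hSigmasym : Sgᵀ = Sg) (hSigma : Sg ^ 2 + p = 0)
    (L : ℝ → Matrix (Fin n) (Fin n) ℂ)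
    (hL : ∀ u : ℝ, L u = NormedSpace.exp (u • Sg))
    (H H' : ℝ → Matrix (Fin n) (Fin n) ℂ)
    (hHsym : ∀ u, (H u)ᵀ = H u)
    (hH : ∀ u, HasDerivAt H (H' u) u)
    (hH' : ∀ u, L u * H' u * (L u)ᵀ = 1)
    (I : Set ℝ) (hI : IsOpen I)
    (hinv : ∀ u ∈ I, IsUnit (L u * H u * (L u)ᵀ))
    (S : ℝ → Matrix (Fin n) (Fin n) ℂ)
    (hS : ∀ u, S u = Sg + (L u * H u * (L u)ᵀ)⁻¹) :
    ∀ u ∈ I, HasDerivAt S (-(S u ^ 2) - p) u := by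
  -- exp over ℝ equals exp over ℂ
  have hexp : (NormedSpace.exp : Matrix (Fin n) (Fin n) ℂ → _) = NormedSpace.exp :=
    rfl
  have hLexp : ∀ u : ℝ, L u = NormedSpace.exp (u • Sg) := by
    intro u; exact hL u
  -- derivative of L
  have hLderiv : ∀ u : ℝ, HasDerivAt L (Sg * L u) u := by
    intro u
    have := hasDerivAt_exp_smul_const' (𝕂 := ℝ) Sg u
    have this : HasDerivAt (fun v : ℝ => NormedSpace.exp (v • Sg)) (Sg * L u) u := by
      rw [hLexp u]; exact this
    exact this.congr_of_eventuallyEq (by filter_upwards with v using (hLexp v))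
  have hLderiv' : ∀ u : ℝ, HasDerivAt L (L u * Sg) u := by
    intro u
    have := hasDerivAt_exp_smul_const (𝕂 := ℝ) Sg u
    have this : HasDerivAt (fun v : ℝ => NormedSpace.exp (v • Sg)) (L u * Sg) u := by
      rw [hLexp u]; exact this
    exact this.congr_of_eventuallyEq (by filter_upwards with v using (hLexp v))
  -- L is symmetric
  have hLsym : ∀ u : ℝ, (L u)ᵀ = L u := by
    intro u
    rw [hLexp u, ← Matrix.exp_transpose, Matrix.transpose_smul, hSigmasym]
  set M : ℝ → Matrix (Fin n) (Fin n) ℂ := fun u => L u * H u * (L u)ᵀ with hM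
  -- derivative of M
  have hMderiv : ∀ u : ℝ, HasDerivAt M (Sg * M u + 1 + M u * Sg) u := by
    intro u
    have h1 : HasDerivAt (fun v => L v * H v * (L v)ᵀ)
        ((Sg * L u * H u + L u * H' u) * (L u)ᵀ + (L u * H u) * (L u * Sg)ᵀ) u := by
      have hLt : HasDerivAt (fun v => (L v)ᵀ) ((L u * Sg)ᵀ) u := by
        have := (hLderiv' u)
        exact (Matrix.transposeLinearEquiv (Fin n) (Fin n) ℝ
          ℂ).toLinearMap.toContinuousLinearMap.hasFDerivAt.comp_hasDerivAt u this
      exact (((hLderiv u).mul (hH u)).mul hLt)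
    convert h1 using 1
    have hone := hH' u
    rw [hLsym u] at hone
    have hcomm : Sg * L u = L u * Sg := (hLderiv u).unique (hLderiv' u)
    rw [Matrix.transpose_mul, hLsym u, hSigmasym, hM]
    simp only [hLsym u]
    have key : L u * H u * (Sg * L u) = L u * H u * L u * Sg := by
      rw [hcomm, ← Matrix.mul_assoc]
    rw [Matrix.add_mul, hone, key]
    noncomm_ring
  intro u hu
  have hUnit : IsUnit (M u) := hinv u hu
  -- derivative of M⁻¹
  have hMinv : HasDerivAt (fun v => (M v)⁻¹) (-((M u)⁻¹ * (Sg * M u + 1 + M u * Sg) * (M u)⁻¹)) u := by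
    obtain ⟨w, hw⟩ := hUnit
    have hf : HasFDerivAt Ring.inverse
        (-ContinuousLinearMap.mulLeftRight ℝ _ (↑w⁻¹) (↑w⁻¹)) (M u) := by
      rw [← hw]; exact hasFDerivAt_ringInverse w
    have := hf.comp_hasDerivAt u (hMderiv u)
    simp only [ContinuousLinearMap.neg_apply, ContinuousLinearMap.mulLeftRight_apply] at this
    have hinv_eq : (↑w⁻¹ : Matrix (Fin n) (Fin n) ℂ) = (M u)⁻¹ := by
      rw [Matrix.nonsing_inv_eq_ringInverse, ← hw, Ring.inverse_unit]
    rw [hinv_eq] at this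
    refine (this.congr_of_eventuallyEq ?_)
    filter_upwards with v
    rw [Function.comp_apply, Matrix.nonsing_inv_eq_ringInverse]
  -- derivative of S
  have hSderiv : HasDerivAt S (-((M u)⁻¹ * (Sg * M u + 1 + M u * Sg) * (M u)⁻¹)) u := by
    have := (hasDerivAt_const u Sg).add hMinv
    rw [zero_add] at this
    exact this.congr_of_eventuallyEq (by filter_upwards with v using (hS v))
  convert hSderiv using 1
  have h1 : M u * (M u)⁻¹ = 1 := Matrix.mul_nonsing_inv _ ((Matrix.isUnit_iff_isUnit_det _).mp hUnit)
  have h2 : (M u)⁻¹ * M u = 1 := Matrix.nonsing_inv_mul _ ((Matrix.isUnit_iff_isUnit_det _).mp hUnit)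
  have hp : p = -(Sg ^ 2) := eq_neg_of_add_eq_zero_right hSigma
  rw [hS u, hp, show L u * H u * (L u)ᵀ = M u from rfl]
  have e1 : (M u)⁻¹ * (Sg * M u) * (M u)⁻¹ = (M u)⁻¹ * Sg := by
    rw [Matrix.mul_assoc ((M u)⁻¹), Matrix.mul_assoc Sg, h1, Matrix.mul_one]
  have e2 : (M u)⁻¹ * (M u * Sg) * (M u)⁻¹ = Sg * (M u)⁻¹ := by
    rw [← Matrix.mul_assoc ((M u)⁻¹) (M u) Sg, h2, Matrix.one_mul]
  rw [Matrix.mul_add, Matrix.mul_add, Matrix.add_mul, Matrix.add_mul, e1, e2, Matrix.mul_one]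
  noncomm_ring
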